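/- Entanglement fidelity is continuous in the input operator: |F_e(B + Δ, A) - F_e(B, A)| ≤ (tr|Δ|)² + 2 tr|Δ|, where |Δ| = √(Δ†Δ). -/

import Mathlib

open Matrix

open scoped ComplexOrder in
/-- The square root of a positive semidefinite matrix, as `Matrix.PosSemidef.sqrt` was defined
in Mathlib (December 2024); it has since been removed. -/
noncomputable def Matrix.PosSemidef.sqrt {n 𝕜 : Type*} [Fintype n] [RCLike 𝕜] [DecidableEq n]
    {A : Matrix n n 𝕜} (hA : A.PosSemidef) : Matrix n n 𝕜 :=
  hA.1.eigenvectorUnitary.1 * diagonal ((↑) ∘ (√·) ∘ hA.1.eigenvalues) *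
    (star hA.1.eigenvectorUnitary : Matrix n n 𝕜)

open scoped ComplexOrder

namespace Stmt7Aux

variable {d r : ℕ}

lemma norm_dot_le (u v : Fin d → ℂ) :
    ‖∑ k, (starRingEnd ℂ) (u k) * v k‖ ^ 2 ≤ (∑ k, ‖u k‖ ^ 2) * ∑ k, ‖v k‖ ^ 2 := by
  calc ‖∑ k, (starRingEnd ℂ) (u k) * v k‖ ^ 2
      ≤ (∑ k, ‖u k‖ * ‖v k‖) ^ 2 := by
        apply pow_le_pow_left₀ (norm_nonneg _)
        refine (norm_sum_le _ _).trans ?_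
        apply Finset.sum_le_sum
        intro k _
        rw [norm_mul, RCLike.norm_conj]
    _ ≤ (∑ k, ‖u k‖ ^ 2) * ∑ k, ‖v k‖ ^ 2 :=
        Finset.sum_mul_sq_le_sq_mul_sq _ _ _

lemma re_dot (v : Fin d → ℂ) : (star v ⬝ᵥ v).re = ∑ k, ‖v k‖ ^ 2 := by
  rw [dotProduct, Complex.re_sum]
  congr 1; ext k
  simp [← Complex.normSq_eq_norm_sq, Complex.normSq_apply,
    Complex.mul_re, Pi.star_apply, Complex.star_def]

lemma sum_mv (M : Fin r → Matrix (Fin d) (Fin d) ℂ) (v : Fin d → ℂ) :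
    ((∑ i, M i) *ᵥ v) = ∑ i, M i *ᵥ v := by
  ext k
  simp only [Matrix.mulVec, dotProduct, Matrix.sum_apply, Finset.sum_apply, Finset.sum_mul]
  exact Finset.sum_comm

lemma dot_sum (v : Fin d → ℂ) (w : Fin r → Fin d → ℂ) :
    v ⬝ᵥ (∑ i, w i) = ∑ i, v ⬝ᵥ w i := by
  simp only [dotProduct, Finset.sum_apply, Finset.mul_sum]
  exact Finset.sum_comm

/-- Key lemma: `∑ i ‖tr (Aᵢ (U D U*))‖² ≤ (∑ |μ j|)²`. -/
lemma key (A : Fin r → Matrix (Fin d) (Fin d) ℂ)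
    (hA : (1 - ∑ i, (A i)ᴴ * A i).PosSemidef)
    (U : Matrix (Fin d) (Fin d) ℂ) (hU : star U * U = 1)
    (μ : Fin d → ℝ) :
    ∑ i, ‖(A i * (U * diagonal (RCLike.ofReal ∘ μ) * star U)).trace‖ ^ 2
      ≤ (∑ j, |μ j|) ^ 2 := by
  classical
  set u : Fin d → Fin d → ℂ := fun j k => U k j with hu
  have hcol : ∀ j, ∑ k, ‖u j k‖ ^ 2 = 1 := by
    intro j
    have h1 : (star U * U) j j = 1 := by rw [hU]; simp
    have h2 := congrArg Complex.re h1
    rw [Matrix.mul_apply] at h2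
    simp only [Complex.one_re] at h2
    rw [← h2, Complex.re_sum]
    congr 1; ext k
    simp [Matrix.star_apply, Complex.star_def, Complex.mul_re, Complex.normSq_apply,
      Complex.sq_norm, hu]
  set c : Fin r → Fin d → ℂ := fun i j => ∑ k, (starRingEnd ℂ) (u j k) * (A i *ᵥ u j) k with hc
  have htr : ∀ i, (A i * (U * diagonal (RCLike.ofReal ∘ μ) * star U)).trace
      = ∑ j, (μ j : ℂ) * c i j := by
    intro i
    rw [show A i * (U * diagonal (RCLike.ofReal ∘ μ) * star U)
        = (A i * U * diagonal (RCLike.ofReal ∘ μ)) * star U by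
          simp only [Matrix.mul_assoc],
      trace_mul_comm, Matrix.trace]
    congr 1; ext j
    simp only [Matrix.diag_apply, Matrix.mul_apply, hc, Matrix.mulVec, dotProduct,
      Matrix.diagonal_apply, Matrix.star_apply, Function.comp, Complex.star_def,
      mul_ite, mul_zero, ite_mul, zero_mul, Finset.sum_ite_eq', Finset.mem_univ, if_true]
    rw [Finset.mul_sum]
    apply Finset.sum_congr rfl
    intro k _
    rw [← mul_assoc, mul_comm]
    simp [hu]
  have hcb : ∀ j, ∑ i, ‖c i j‖ ^ 2 ≤ 1 := by
    intro j
    have hpos := hA.dotProduct_mulVec_nonneg (u j)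
    have hre : 0 ≤ (star (u j) ⬝ᵥ ((1 - ∑ i, (A i)ᴴ * A i) *ᵥ u j)).re :=
      (Complex.le_def.mp hpos).1
    have hexp : (star (u j) ⬝ᵥ ((1 - ∑ i, (A i)ᴴ * A i) *ᵥ u j))
        = star (u j) ⬝ᵥ u j - ∑ i, star (A i *ᵥ u j) ⬝ᵥ (A i *ᵥ u j) := by
      rw [Matrix.sub_mulVec, dotProduct_sub, Matrix.one_mulVec]
      congr 1
      rw [sum_mv, dot_sum]
      apply Finset.sum_congr rfl
      intro i _
      rw [Matrix.star_mulVec, ← Matrix.mulVec_mulVec, Matrix.dotProduct_mulVec]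
    have h2 : ∑ i, ∑ k, ‖(A i *ᵥ u j) k‖ ^ 2 ≤ 1 := by
      rw [hexp, Complex.sub_re, Complex.re_sum] at hre
      simp only [re_dot] at hre
      rw [hcol j] at hre
      linarith
    refine le_trans ?_ h2
    apply Finset.sum_le_sum
    intro i _
    calc ‖c i j‖ ^ 2 ≤ (∑ k, ‖u j k‖ ^ 2) * ∑ k, ‖(A i *ᵥ u j) k‖ ^ 2 := norm_dot_le _ _
      _ = ∑ k, ‖(A i *ᵥ u j) k‖ ^ 2 := by rw [hcol j, one_mul]
  have habs : ∀ i, ‖(A i * (U * diagonal (RCLike.ofReal ∘ μ) * star U)).trace‖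
      ≤ ∑ j, |μ j| * ‖c i j‖ := by
    intro i
    rw [htr i]
    refine (norm_sum_le _ _).trans ?_
    apply Finset.sum_le_sum
    intro j _
    rw [norm_mul, Complex.norm_real, Real.norm_eq_abs]
  calc ∑ i, ‖(A i * (U * diagonal (RCLike.ofReal ∘ μ) * star U)).trace‖ ^ 2
      ≤ ∑ i, (∑ j, |μ j| * ‖c i j‖) ^ 2 := by
        apply Finset.sum_le_sum
        intro i _
        exact pow_le_pow_left₀ (norm_nonneg _) (habs i) 2
    _ ≤ ∑ i, (∑ j, |μ j|) * ∑ j, |μ j| * ‖c i j‖ ^ 2 := by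
        apply Finset.sum_le_sum
        intro i _
        calc (∑ j, |μ j| * ‖c i j‖) ^ 2
            = (∑ j, Real.sqrt (|μ j|) * (Real.sqrt (|μ j|) * ‖c i j‖)) ^ 2 := by
              congr 1; apply Finset.sum_congr rfl; intro j _
              rw [← mul_assoc, Real.mul_self_sqrt (abs_nonneg _)]
          _ ≤ (∑ j, Real.sqrt (|μ j|) ^ 2) * ∑ j, (Real.sqrt (|μ j|) * ‖c i j‖) ^ 2 :=
              Finset.sum_mul_sq_le_sq_mul_sq _ _ _
          _ = (∑ j, |μ j|) * ∑ j, |μ j| * ‖c i j‖ ^ 2 := by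
              congr 1
              · apply Finset.sum_congr rfl; intro j _; exact Real.sq_sqrt (abs_nonneg _)
              · apply Finset.sum_congr rfl; intro j _
                rw [mul_pow, Real.sq_sqrt (abs_nonneg _)]
    _ = (∑ j, |μ j|) * ∑ j, |μ j| * ∑ i, ‖c i j‖ ^ 2 := by
        rw [← Finset.mul_sum]
        congr 1
        rw [Finset.sum_comm]
        apply Finset.sum_congr rfl; intro j _
        rw [Finset.mul_sum]
    _ ≤ (∑ j, |μ j|) * ∑ j, |μ j| * 1 := by
        apply mul_le_mul_of_nonneg_left
        · apply Finset.sum_le_sum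
          intro j _
          exact mul_le_mul_of_nonneg_left (hcb j) (abs_nonneg _)
        · exact Finset.sum_nonneg fun j _ => abs_nonneg _
    _ = (∑ j, |μ j|) ^ 2 := by simp [sq]

lemma mid (W : Matrix (Fin d) (Fin d) ℂ) (hW : star W * W = 1) (f g : Fin d → ℂ) :
    (W * diagonal f * star W) * (W * diagonal g * star W)
      = W * diagonal (f * g) * star W := by
  rw [show (W * diagonal f * star W) * (W * diagonal g * star W)
      = W * diagonal f * (star W * W) * (diagonal g * star W) by
        simp only [Matrix.mul_assoc], hW]
  rw [Matrix.mul_one]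
  simp only [Matrix.mul_assoc]
  congr 1
  rw [← Matrix.mul_assoc, Matrix.diagonal_mul_diagonal]
  rfl

lemma trace_udu (W : Matrix (Fin d) (Fin d) ℂ) (hW : star W * W = 1) (f : Fin d → ℝ) :
    (W * diagonal (RCLike.ofReal ∘ f) * star W).trace = ((∑ j, f j : ℝ) : ℂ) := by
  rw [Matrix.trace_mul_cycle, hW, Matrix.one_mul, Matrix.trace_diagonal]
  push_cast
  rfl

lemma spec_eq {M : Matrix (Fin d) (Fin d) ℂ} (h : M.IsHermitian) :
    (h.eigenvectorUnitary : Matrix (Fin d) (Fin d) ℂ) * diagonal (RCLike.ofReal ∘ h.eigenvalues)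
      * star (h.eigenvectorUnitary : Matrix (Fin d) (Fin d) ℂ) = M := by
  conv_rhs => rw [h.spectral_theorem]
  rw [Unitary.conjStarAlgAut_apply]

open scoped MatrixOrder in
/-- `tr |Δ| = ∑ |eigenvalues|`. -/
lemma sqrt_trace (Δ : Matrix (Fin d) (Fin d) ℂ) (hΔ : Δ.IsHermitian) :
    (Matrix.posSemidef_conjTranspose_mul_self Δ).sqrt.trace
      = ((∑ j, |hΔ.eigenvalues j| : ℝ) : ℂ) := by
  classical
  set W : Matrix (Fin d) (Fin d) ℂ := (hΔ.eigenvectorUnitary : Matrix (Fin d) (Fin d) ℂ)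
    with hWdef
  have hW : star W * W = 1 := by
    simpa [hWdef] using unitary.coe_star_mul_self hΔ.eigenvectorUnitary
  set N : Matrix (Fin d) (Fin d) ℂ :=
    W * diagonal (RCLike.ofReal ∘ fun j => |hΔ.eigenvalues j|) * star W with hNdef
  have hNpsd : N.PosSemidef := by
    rw [hNdef, Matrix.star_eq_conjTranspose]
    exact (posSemidef_diagonal_iff.mpr fun j => by
      simpa using Complex.zero_le_real.mpr (abs_nonneg (hΔ.eigenvalues j))).mul_mul_conjTranspose_same W
  have hsq : N ^ 2 = Δᴴ * Δ := by
    rw [pow_two, hNdef, mid W hW, hΔ.eq]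
    conv_rhs => rw [← spec_eq hΔ]
    rw [mid W hW]
    congr 2
    apply congrArg
    ext j
    simp only [Function.comp, Pi.mul_apply]
    rw [← RCLike.ofReal_mul, ← RCLike.ofReal_mul, abs_mul_abs_self]
  have hsqrt : (Matrix.posSemidef_conjTranspose_mul_self Δ).sqrt = N := by
    have h1 : (Matrix.posSemidef_conjTranspose_mul_self Δ).sqrt = cfc Real.sqrt (Δᴴ * Δ) := by
      rw [(Matrix.posSemidef_conjTranspose_mul_self Δ).1.cfc_eq, IsHermitian.cfc,
        Unitary.conjStarAlgAut_apply]
      rfl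
    rw [h1, ← cfcₙ_eq_cfc, ← CFC.sqrt_eq_real_sqrt (Δᴴ * Δ)
      (Matrix.posSemidef_conjTranspose_mul_self Δ).nonneg]
    exact CFC.sqrt_unique (by rw [← pow_two]; exact hsq) hNpsd.nonneg
  rw [hsqrt, hNdef, trace_udu W hW]

end Stmt7Aux

open Stmt7Aux in
open scoped ComplexOrder in
/-- Continuity of entanglement fidelity in the input operator:
`|F_e(B + Δ, A) - F_e(B, A)| ≤ (tr|Δ|)² + 2 tr|Δ|`, where `|Δ| = √(ΔᴴΔ)`. -/
theorem stmt_7 {d r : ℕ} (A : Fin r → Matrix (Fin d) (Fin d) ℂ)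
    (hA : (1 - ∑ i, (A i)ᴴ * A i).PosSemidef)
    (B Δ : Matrix (Fin d) (Fin d) ℂ)
    (hB : B.PosSemidef) (hBtr : B.trace.re ≤ 1) (hΔ : Δ.IsHermitian) :
    |∑ i, ‖(A i * (B + Δ)).trace‖ ^ 2 - ∑ i, ‖(A i * B).trace‖ ^ 2| ≤
      ((Matrix.posSemidef_conjTranspose_mul_self Δ).sqrt.trace).re ^ 2 +
        2 * ((Matrix.posSemidef_conjTranspose_mul_self Δ).sqrt.trace).re := by
  classical
  set t : ℝ := ∑ j, |hΔ.eigenvalues j| with ht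
  have ht0 : 0 ≤ t := Finset.sum_nonneg fun j _ => abs_nonneg _
  have hre : ((Matrix.posSemidef_conjTranspose_mul_self Δ).sqrt.trace).re = t := by
    rw [sqrt_trace Δ hΔ, Complex.ofReal_re]
  rw [hre]
  -- bound on the Δ part
  have hWΔ : star (hΔ.eigenvectorUnitary : Matrix (Fin d) (Fin d) ℂ)
      * (hΔ.eigenvectorUnitary : Matrix (Fin d) (Fin d) ℂ) = 1 := by
    simpa using unitary.coe_star_mul_self hΔ.eigenvectorUnitary
  have hSΔ : ∑ i, ‖(A i * Δ).trace‖ ^ 2 ≤ t ^ 2 := by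
    have h := key A hA _ hWΔ hΔ.eigenvalues
    rw [spec_eq hΔ] at h
    exact h
  -- bound on the B part
  have hWB : star (hB.1.eigenvectorUnitary : Matrix (Fin d) (Fin d) ℂ)
      * (hB.1.eigenvectorUnitary : Matrix (Fin d) (Fin d) ℂ) = 1 := by
    simpa using unitary.coe_star_mul_self hB.1.eigenvectorUnitary
  have hBtr' : ∑ j, |hB.1.eigenvalues j| ≤ 1 := by
    have h1 : ∑ j, |hB.1.eigenvalues j| = ∑ j, hB.1.eigenvalues j := by
      apply Finset.sum_congr rfl
      intro j _
      exact abs_of_nonneg (hB.eigenvalues_nonneg j)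
    have h2 : B.trace = ((∑ j, hB.1.eigenvalues j : ℝ) : ℂ) := by
      conv_lhs => rw [← spec_eq hB.1]
      rw [trace_udu _ hWB]
    rw [h1]
    have := hBtr
    rw [h2, Complex.ofReal_re] at this
    exact this
  have hSB : ∑ i, ‖(A i * B).trace‖ ^ 2 ≤ 1 := by
    have h := key A hA _ hWB hB.1.eigenvalues
    rw [spec_eq hB.1] at h
    refine h.trans ?_
    calc (∑ j, |hB.1.eigenvalues j|) ^ 2 ≤ 1 ^ 2 := by
          apply pow_le_pow_left₀ (Finset.sum_nonneg fun j _ => abs_nonneg _) hBtr'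
      _ = 1 := one_pow 2
  -- pointwise bound
  set x : Fin r → ℝ := fun i => ‖(A i * B).trace‖ with hx
  set y : Fin r → ℝ := fun i => ‖(A i * Δ).trace‖ with hy
  have hxy : ∀ i, |‖(A i * (B + Δ)).trace‖ ^ 2 - x i ^ 2| ≤ 2 * (x i * y i) + y i ^ 2 := by
    intro i
    have hadd : (A i * (B + Δ)).trace = (A i * B).trace + (A i * Δ).trace := by
      rw [mul_add, trace_add]
    rw [hadd]
    set a := (A i * B).trace
    set b := (A i * Δ).trace
    have h1 : ‖a + b‖ ≤ ‖a‖ + ‖b‖ := norm_add_le a b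
    have h2 : ‖a‖ ≤ ‖a + b‖ + ‖b‖ := by
      simpa using norm_add_le (a + b) (-b)
    rw [abs_le]
    constructor <;> nlinarith [norm_nonneg a, norm_nonneg b, norm_nonneg (a + b)]
  -- Cauchy-Schwarz for the cross term
  have hxy0 : 0 ≤ ∑ i, x i * y i :=
    Finset.sum_nonneg fun i _ => mul_nonneg (norm_nonneg _) (norm_nonneg _)
  have hcross : ∑ i, x i * y i ≤ t := by
    have h := Finset.sum_mul_sq_le_sq_mul_sq Finset.univ x y
    have hx2 : ∑ i, x i ^ 2 ≤ 1 := hSB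
    have hy2 : ∑ i, y i ^ 2 ≤ t ^ 2 := hSΔ
    nlinarith [Finset.sum_nonneg (fun i (_ : i ∈ Finset.univ) => sq_nonneg (y i))]
  -- put everything together
  have hsplit : ∑ i, ‖(A i * (B + Δ)).trace‖ ^ 2 - ∑ i, x i ^ 2
      = ∑ i, (‖(A i * (B + Δ)).trace‖ ^ 2 - x i ^ 2) := by rw [Finset.sum_sub_distrib]
  calc |∑ i, ‖(A i * (B + Δ)).trace‖ ^ 2 - ∑ i, x i ^ 2|
      = |∑ i, (‖(A i * (B + Δ)).trace‖ ^ 2 - x i ^ 2)| := by rw [hsplit]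
    _ ≤ ∑ i, |‖(A i * (B + Δ)).trace‖ ^ 2 - x i ^ 2| := Finset.abs_sum_le_sum_abs _ _
    _ ≤ ∑ i, (2 * (x i * y i) + y i ^ 2) := Finset.sum_le_sum fun i _ => hxy i
    _ = 2 * (∑ i, x i * y i) + ∑ i, y i ^ 2 := by
        rw [Finset.sum_add_distrib, ← Finset.mul_sum]
    _ ≤ 2 * t + t ^ 2 := by
        have := hSΔ
        linarith
    _ = t ^ 2 + 2 * t := by ring
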